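/- Let θ > 0 and α > −1 be real numbers and N ≥ 1 an integer. Define the N×N matrix G = (g_{ij})_{i,j=1}^N by g_{ij} = 1/(j+θ(i−1)+α), which is the Gram matrix ∫_0^1 x^{j−1}·x^{θ(i−1)}·x^α dx of the monomial systems x^{j−1} and x^{θ(i−1)} with respect to the weight x^α on (0,1). Then G is invertible and its inverse is the matrix C = (c_{kl})_{k,l=1}^N with entries c_{kl} = θ · [((k+α)/θ)_N / ((k−1)!(N−k)!)] · [(θ(l−1)+α+1)_N / ((l−1)!(N−l)!)] · (−1)^{k+l}/(k+θ(l−1)+α); equivalently, Σ_{l=1}^N c_{kl} · 1/(j+θ(l−1)+α) = δ_{kj} for all k,j. -/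

import Mathlib

open Finset Polynomial

lemma basis_coeff {F : Type*} [Field F] {ι : Type*} [DecidableEq ι]
    (s : Finset ι) (v : ι → F) (i : ι) (hvs : Set.InjOn v s) (hi : i ∈ s) :
    (Lagrange.basis s v i).coeff (#s - 1) = ∏ j ∈ s.erase i, (v i - v j)⁻¹ := by
  have h1 : (Lagrange.basis s v i).coeff (#s - 1) = (Lagrange.basis s v i).leadingCoeff := by
    rw [Polynomial.leadingCoeff, Lagrange.natDegree_basis hvs hi]
  rw [h1, Lagrange.basis, leadingCoeff_prod]
  refine Finset.prod_congr rfl fun j hj => ?_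
  have hne : v i ≠ v j := by
    rcases mem_erase.mp hj with ⟨hij, hj'⟩
    exact fun h => hij (hvs hj' hi h.symm)
  rw [Lagrange.basisDivisor, leadingCoeff_mul, leadingCoeff_C,
    (monic_X_sub_C (v j)).leadingCoeff, mul_one]

lemma residue_sum {F : Type*} [Field F] {ι : Type*} [DecidableEq ι]
    (s : Finset ι) (v : ι → F) (hvs : Set.InjOn v s) (p : F[X])
    (hp : p.degree < #s) :
    ∑ i ∈ s, p.eval (v i) * ∏ j ∈ s.erase i, (v i - v j)⁻¹ = p.coeff (#s - 1) := by
  conv_rhs => rw [Lagrange.eq_interpolate hvs hp]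
  rw [Lagrange.interpolate_apply, finset_sum_coeff]
  refine Finset.sum_congr rfl fun i hi => ?_
  rw [coeff_C_mul, basis_coeff s v i hvs hi]

lemma node_sum {N : ℕ} (x : Fin N → ℝ) (hx : Function.Injective x) (g : ℝ → ℝ → ℝ) :
    ∑ r ∈ Finset.image x univ, g r (∏ t ∈ (Finset.image x univ).erase r, (r - t)) =
    ∑ l, g (x l) (∏ m ∈ univ.erase l, (x l - x m)) := by
  rw [Finset.sum_image (fun a _ b _ h => hx h)]
  refine Finset.sum_congr rfl fun l _ => ?_
  rw [← Finset.image_erase hx, Finset.prod_image (fun a _ b _ h => hx h)]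

lemma prod_monic_XC (t : Finset (Fin N)) (y : Fin N → ℝ) :
    (∏ m ∈ t, (X + C (y m)) : ℝ[X]).Monic :=
  monic_prod_of_monic _ _ fun m _ => monic_X_add_C _

lemma prod_natDegree_XC (t : Finset (Fin N)) (y : Fin N → ℝ) :
    (∏ m ∈ t, (X + C (y m)) : ℝ[X]).natDegree = #t := by
  rw [natDegree_prod _ _ fun m _ => (monic_X_add_C (y m)).ne_zero]
  simp [natDegree_X_add_C]

lemma cauchy_entry (N : ℕ) (x y : Fin N → ℝ) (hx : Function.Injective x)
    (hy : Function.Injective y) (hxy : ∀ l m, x l + y m ≠ 0) (k j : Fin N) :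
    ∑ l, ((∏ m, (x l + y m)) * (∏ m, (x m + y k)) *
      ((∏ m ∈ univ.erase l, (x l - x m))⁻¹ * (∏ m ∈ univ.erase k, (y k - y m))⁻¹ *
        (x l + y k)⁻¹)) * (x l + y j)⁻¹ = if k = j then 1 else 0 := by
  set B := ∏ m, (x m + y k) with hBdef
  set D := ∏ m ∈ univ.erase k, (y k - y m) with hDdef
  have hB : B ≠ 0 := Finset.prod_ne_zero_iff.mpr fun m _ => hxy m k
  have hD : D ≠ 0 := Finset.prod_ne_zero_iff.mpr fun m hm =>
    sub_ne_zero_of_ne fun h => (mem_erase.mp hm).1 (hy h.symm)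
  have hs0card : #(Finset.image x univ) = N := by
    rw [Finset.card_image_of_injective _ hx, card_univ, Fintype.card_fin]
  have key : ∀ l : Fin N,
      ((∏ m, (x l + y m)) * B *
      ((∏ m ∈ univ.erase l, (x l - x m))⁻¹ * D⁻¹ * (x l + y k)⁻¹)) * (x l + y j)⁻¹
      = B * D⁻¹ * ((∏ m, (x l + y m)) * (x l + y k)⁻¹ * (x l + y j)⁻¹ *
          (∏ m ∈ univ.erase l, (x l - x m))⁻¹) := fun l => by ring
  simp_rw [key, ← Finset.mul_sum]
  by_cases hkj : k = j
  · subst hkj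
    rw [if_pos rfl]
    -- diagonal case
    set p : ℝ[X] := ∏ m ∈ univ.erase k, (X + C (y m)) with hpdef
    have hpne : p ≠ 0 := (prod_monic_XC _ y).ne_zero
    have hpd : p.natDegree = N - 1 := by
      rw [hpdef, prod_natDegree_XC, card_erase_of_mem (mem_univ k), card_univ, Fintype.card_fin]
    have hN : 1 ≤ N := Nat.one_le_iff_ne_zero.mpr (by rintro rfl; exact absurd k.2 (by omega))
    have ha : -y k ∉ Finset.image x univ := by
      simp only [Finset.mem_image, mem_univ, true_and, not_exists]
      intro m h
      exact hxy m k (by rw [h]; ring)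
    set s : Finset ℝ := insert (-y k) (Finset.image x univ) with hsdef
    have hscard : #s = N + 1 := by rw [hsdef, Finset.card_insert_of_notMem ha, hs0card]
    have hdeg : p.degree < (#s : ℕ) := by
      rw [hscard, degree_eq_natDegree hpne, hpd]
      exact_mod_cast by omega
    have hres := residue_sum s id (fun a _ b _ h => h) p hdeg
    simp only [id_eq] at hres
    rw [hscard] at hres
    have hcoeff : p.coeff (N + 1 - 1) = 0 := coeff_eq_zero_of_natDegree_lt (by omega)
    rw [hcoeff, hsdef, Finset.sum_insert ha] at hres
    have heval : ∀ t : ℝ, p.eval t = ∏ m ∈ univ.erase k, (t + y m) := by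
      intro t; rw [hpdef, eval_prod]; simp
    -- the inserted term
    have hterm : p.eval (-y k) * ∏ t ∈ (insert (-y k) (Finset.image x univ)).erase (-y k),
        (-y k - t)⁻¹ = -(D * B⁻¹) := by
      rw [Finset.erase_insert ha]
      have h1 : p.eval (-y k) = (-1) ^ (N - 1) * D := by
        rw [heval]
        have h : ∀ m ∈ univ.erase k, -y k + y m = (-1) * (y k - y m) := by
          intro m _; ring
        rw [Finset.prod_congr rfl h, Finset.prod_mul_distrib, Finset.prod_const,
          card_erase_of_mem (mem_univ k), card_univ, Fintype.card_fin, hDdef]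
      have h2 : ∏ t ∈ Finset.image x univ, (-y k - t)⁻¹ = ((-1) ^ N * B)⁻¹ := by
        rw [Finset.prod_inv_distrib]
        congr 1
        rw [Finset.prod_image (fun a _ b _ h => hx h)]
        have h : ∀ m ∈ (univ : Finset (Fin N)), -y k - x m = (-1) * (x m + y k) := by
          intro m _; ring
        rw [Finset.prod_congr rfl h, Finset.prod_mul_distrib, Finset.prod_const,
          card_univ, Fintype.card_fin, hBdef]
      rw [h1, h2, mul_inv]
      have h3 : (-1 : ℝ) ^ (N - 1) * ((-1 : ℝ) ^ N)⁻¹ = -1 := by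
        rw [← inv_pow, inv_neg, inv_one, ← pow_add]
        exact Odd.neg_one_pow ⟨N - 1, by omega⟩
      linear_combination (D * B⁻¹) * h3
    -- the node sum
    have hnodes : ∑ r ∈ Finset.image x univ, p.eval r *
          ∏ t ∈ (insert (-y k) (Finset.image x univ)).erase r, (r - t)⁻¹
        = ∑ l, p.eval (x l) * ((x l + y k)⁻¹ * (∏ m ∈ univ.erase l, (x l - x m))⁻¹) := by
      rw [Finset.sum_image (fun a _ b _ h => hx h)]
      refine Finset.sum_congr rfl fun l _ => ?_
      have hne : -y k ≠ x l := fun h => ha (h ▸ Finset.mem_image_of_mem x (mem_univ l))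
      have h4 : (insert (-y k) (Finset.image x univ)).erase (x l)
          = insert (-y k) ((Finset.image x univ).erase (x l)) :=
        Finset.erase_insert_of_ne hne
      have h5 : -y k ∉ (Finset.image x univ).erase (x l) :=
        fun h => ha (Finset.mem_of_mem_erase h)
      rw [h4, Finset.prod_insert h5, ← Finset.image_erase hx,
        Finset.prod_image (fun a _ b _ h => hx h), sub_neg_eq_add,
        Finset.prod_inv_distrib]
    rw [hterm, hnodes] at hres
    have hS : ∑ l, p.eval (x l) * ((x l + y k)⁻¹ * (∏ m ∈ univ.erase l, (x l - x m))⁻¹)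
        = D * B⁻¹ := by linarith [hres]
    have hsum : ∑ l, ((∏ m, (x l + y m)) * (x l + y k)⁻¹ * (x l + y k)⁻¹ *
          (∏ m ∈ univ.erase l, (x l - x m))⁻¹) = D * B⁻¹ := by
      rw [← hS]
      refine Finset.sum_congr rfl fun l _ => ?_
      rw [heval (x l), ← Finset.mul_prod_erase univ (fun m => x l + y m) (mem_univ k)]
      have h6 := mul_inv_cancel₀ (hxy l k)
      linear_combination ((∏ m ∈ univ.erase k, (x l + y m)) * (x l + y k)⁻¹ *
        (∏ m ∈ univ.erase l, (x l - x m))⁻¹) * h6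
    rw [hsum]
    field_simp
  · rw [if_neg hkj]
    -- off-diagonal case
    have hjk : j ∈ univ.erase k := mem_erase.mpr ⟨fun h => hkj h.symm, mem_univ j⟩
    set p : ℝ[X] := ∏ m ∈ (univ.erase k).erase j, (X + C (y m)) with hpdef
    have hpne : p ≠ 0 := (prod_monic_XC _ y).ne_zero
    have hN2 : 2 ≤ N := by
      have := Fintype.one_lt_card_iff_nontrivial (α := Fin N) |>.mpr ⟨⟨k, j, fun h => hkj h⟩⟩
      simp at this; omega
    have hpd : p.natDegree = N - 2 := by
      rw [hpdef, prod_natDegree_XC, card_erase_of_mem hjk, card_erase_of_mem (mem_univ k),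
        card_univ, Fintype.card_fin]
      omega
    have hdeg : p.degree < (#(Finset.image x univ) : ℕ) := by
      rw [hs0card, degree_eq_natDegree hpne, hpd]
      exact_mod_cast by omega
    have hres := residue_sum (Finset.image x univ) id (fun a _ b _ h => h) p hdeg
    simp only [id_eq] at hres
    rw [hs0card] at hres
    have hcoeff : p.coeff (N - 1) = 0 := coeff_eq_zero_of_natDegree_lt (by omega)
    rw [hcoeff] at hres
    have heval : ∀ t : ℝ, p.eval t = ∏ m ∈ (univ.erase k).erase j, (t + y m) := by
      intro t; rw [hpdef, eval_prod]; simp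
    have hnodes : ∑ r ∈ Finset.image x univ, p.eval r *
          ∏ t ∈ (Finset.image x univ).erase r, (r - t)⁻¹
        = ∑ l, p.eval (x l) * (∏ m ∈ univ.erase l, (x l - x m))⁻¹ := by
      rw [Finset.sum_image (fun a _ b _ h => hx h)]
      refine Finset.sum_congr rfl fun l _ => ?_
      rw [← Finset.image_erase hx, Finset.prod_image (fun a _ b _ h => hx h),
        Finset.prod_inv_distrib]
    rw [hnodes] at hres
    have hsum : ∑ l, ((∏ m, (x l + y m)) * (x l + y k)⁻¹ * (x l + y j)⁻¹ *
          (∏ m ∈ univ.erase l, (x l - x m))⁻¹) = 0 := by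
      rw [← hres]
      refine Finset.sum_congr rfl fun l _ => ?_
      rw [heval (x l), ← Finset.mul_prod_erase univ (fun m => x l + y m) (mem_univ k),
        ← Finset.mul_prod_erase (univ.erase k) (fun m => x l + y m) hjk]
      have h6 := mul_inv_cancel₀ (hxy l k)
      have h7 := mul_inv_cancel₀ (hxy l j)
      set Q := (∏ m ∈ univ.erase l, (x l - x m))⁻¹
      set E := ∏ m ∈ (univ.erase k).erase j, (x l + y m)
      linear_combination (E * Q * (x l + y j) * (x l + y j)⁻¹) * h6 + (E * Q) * h7
    rw [hsum, mul_zero]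

lemma poch_prod (n : ℕ) (t : ℝ) :
    (ascPochhammer ℝ n).eval t = ∏ m ∈ range n, (t + m) := by
  induction n with
  | zero => simp
  | succ n ih => rw [ascPochhammer_succ_eval, ih, prod_range_succ]

lemma prod_range_sub_cast (n : ℕ) : ∏ m ∈ range n, ((n : ℝ) - m) = n.factorial := by
  have h : ∏ m ∈ range n, ((n : ℝ) - m) = ∏ m ∈ range n, ((n - m : ℕ) : ℝ) := by
    refine prod_congr rfl fun m hm => ?_
    rw [Nat.cast_sub (le_of_lt (mem_range.mp hm))]
  rw [h, ← Nat.cast_prod]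
  norm_cast
  rw [← Finset.prod_range_reflect (fun j => n - j) n,
    ← Finset.prod_range_add_one_eq_factorial n]
  refine prod_congr rfl fun j hj => ?_
  have := mem_range.mp hj
  omega

lemma erase_range_prod : ∀ (N k : ℕ), k < N →
    ∏ m ∈ (range N).erase k, ((k : ℝ) - (m : ℝ)) =
      (-1) ^ (N - 1 - k) * k.factorial * (N - 1 - k).factorial := by
  intro N
  induction N with
  | zero => omega
  | succ N ih =>
    intro k hk
    rcases eq_or_lt_of_le (Nat.lt_succ_iff.mp hk) with h | h
    · subst h
      rw [Finset.range_add_one, Finset.erase_insert (by simp), Nat.succ_sub_one,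
        Nat.sub_self, pow_zero, one_mul, Nat.factorial_zero]
      simpa using prod_range_sub_cast k
    · have hN : N ∉ (range N).erase k := by simp
      rw [Finset.range_add_one, Finset.erase_insert_of_ne (by omega), Finset.prod_insert hN,
        ih k h]
      have e1 : N + 1 - 1 - k = (N - 1 - k) + 1 := by omega
      have e2 : ((k : ℝ) - N) = -((N - k : ℕ) : ℝ) := by
        rw [Nat.cast_sub (le_of_lt h)]; ring
      have e3 : (N - k) = (N - 1 - k) + 1 := by omega
      rw [e1, e2, e3, pow_succ, Nat.factorial_succ]
      push_cast
      ring

lemma fin_image_val (N : ℕ) : (univ : Finset (Fin N)).image Fin.val = range N := by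
  ext m
  simp [Finset.mem_image, Fin.exists_iff]

lemma fin_erase_prod (N : ℕ) (k : Fin N) (f : ℕ → ℝ) :
    ∏ m ∈ univ.erase k, f (m : ℕ) = ∏ m ∈ (range N).erase (k : ℕ), f m := by
  rw [← fin_image_val, ← Finset.image_erase Fin.val_injective,
    Finset.prod_image (fun a _ b _ h => Fin.val_injective h)]

lemma scalar_id (θ u E P fk bk fl bl sk sl : ℝ) (n : ℕ)
    (hθ0 : θ ≠ 0) (hu : u ≠ 0) (hfk : fk ≠ 0) (hbk : bk ≠ 0) (hfl : fl ≠ 0) (hbl : bl ≠ 0)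
    (hsk2 : sk * sk = 1) (hsl2 : sl * sl = 1) :
    θ * (P / (fk * bk)) * (E / (fl * bl)) * (sk * sl / u)
    = (E * (θ ^ n * θ * P)) * ((θ ^ n * (sl * fl * bl))⁻¹ * (sk * fk * bk)⁻¹ * u⁻¹) := by
  have hsk : sk ≠ 0 := fun h => by simp [h] at hsk2
  have hsl : sl ≠ 0 := fun h => by simp [h] at hsl2
  have hθn : θ ^ n ≠ 0 := pow_ne_zero _ hθ0
  field_simp
  linear_combination (P * E * sk * sk) * hsl2 + (P * E) * hsk2

theorem jacobi_gram_inverse (θ α : ℝ) (hθ : 0 < θ) (hα : -1 < α)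
    (N : ℕ) (hN : 1 ≤ N) :
    let G : Matrix (Fin N) (Fin N) ℝ :=
      Matrix.of fun i j => 1 / ((j : ℝ) + 1 + θ * (i : ℝ) + α)
    let C : Matrix (Fin N) (Fin N) ℝ :=
      Matrix.of fun k l =>
        θ * ((ascPochhammer ℝ N).eval (((k : ℝ) + 1 + α) / θ) /
              ((Nat.factorial k : ℝ) * (Nat.factorial (N - 1 - (k : ℕ)) : ℝ))) *
          ((ascPochhammer ℝ N).eval (θ * (l : ℝ) + α + 1) /
              ((Nat.factorial l : ℝ) * (Nat.factorial (N - 1 - (l : ℕ)) : ℝ))) *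
          ((-1) ^ ((k : ℕ) + (l : ℕ)) / ((k : ℝ) + 1 + θ * (l : ℝ) + α))
    C * G = 1 ∧ G * C = 1 := by
  intro G C
  have hθ0 : θ ≠ 0 := ne_of_gt hθ
  set x : Fin N → ℝ := fun i => θ * (i : ℝ) with hxdef
  set y : Fin N → ℝ := fun j => (j : ℝ) + 1 + α with hydef
  have hx : Function.Injective x := by
    intro a b h
    simp only [hxdef] at h
    have := mul_left_cancel₀ hθ0 h
    exact Fin.val_injective (Nat.cast_injective this)
  have hy : Function.Injective y := by
    intro a b h
    simp only [hydef] at h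
    have : (a : ℝ) = (b : ℝ) := by linarith
    exact Fin.val_injective (Nat.cast_injective this)
  have hxy : ∀ l m : Fin N, x l + y m ≠ 0 := by
    intro l m
    have h1 : 0 ≤ θ * (l : ℝ) := mul_nonneg hθ.le (Nat.cast_nonneg _)
    have h2 : (0 : ℝ) ≤ (m : ℝ) := Nat.cast_nonneg _
    simp only [hxdef, hydef]
    nlinarith
  have hCG : C * G = 1 := by
    have hC : ∀ k l : Fin N, C k l =
        ((∏ m, (x l + y m)) * (∏ m, (x m + y k)) *
          ((∏ m ∈ univ.erase l, (x l - x m))⁻¹ * (∏ m ∈ univ.erase k, (y k - y m))⁻¹ *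
            (x l + y k)⁻¹)) := by
      intro k l
      have hkN : (k : ℕ) < N := k.2
      have hlN : (l : ℕ) < N := l.2
      have hP1 : ∏ m, (x m + y k) =
          θ ^ N * (ascPochhammer ℝ N).eval (((k : ℝ) + 1 + α) / θ) := by
        rw [poch_prod, ← Fin.prod_univ_eq_prod_range (fun m => ((k : ℝ) + 1 + α) / θ + m) N]
        have h : ∀ m ∈ (univ : Finset (Fin N)),
            x m + y k = θ * (((k : ℝ) + 1 + α) / θ + (m : ℝ)) := by
          intro m _
          simp only [hxdef, hydef]
          field_simp
          ring
        rw [Finset.prod_congr rfl h, Finset.prod_mul_distrib, Finset.prod_const,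
          card_univ, Fintype.card_fin]
      have hP2 : (ascPochhammer ℝ N).eval (θ * (l : ℝ) + α + 1) = ∏ m, (x l + y m) := by
        rw [poch_prod, ← Fin.prod_univ_eq_prod_range (fun m => θ * (l : ℝ) + α + 1 + m) N]
        refine Finset.prod_congr rfl fun m _ => ?_
        simp only [hxdef, hydef]; ring
      have hF1 : ∏ m ∈ univ.erase k, (y k - y m) =
          (-1) ^ (N - 1 - (k : ℕ)) * ((k : ℕ).factorial : ℝ) *
            ((N - 1 - (k : ℕ)).factorial : ℝ) := by
        have h : ∀ m ∈ univ.erase k, y k - y m = ((k : ℕ) : ℝ) - ((m : ℕ) : ℝ) := by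
          intro m _; simp only [hydef]; ring
        rw [Finset.prod_congr rfl h,
          fin_erase_prod N k (fun m => ((k : ℕ) : ℝ) - (m : ℝ))]
        exact erase_range_prod N k hkN
      have hF2 : ∏ m ∈ univ.erase l, (x l - x m) =
          θ ^ (N - 1) * ((-1) ^ (N - 1 - (l : ℕ)) * ((l : ℕ).factorial : ℝ) *
            ((N - 1 - (l : ℕ)).factorial : ℝ)) := by
        have h : ∀ m ∈ univ.erase l, x l - x m = θ * (((l : ℕ) : ℝ) - ((m : ℕ) : ℝ)) := by
          intro m _; simp only [hxdef]; ring
        rw [Finset.prod_congr rfl h, Finset.prod_mul_distrib, Finset.prod_const,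
          card_erase_of_mem (mem_univ l), card_univ, Fintype.card_fin,
          fin_erase_prod N l (fun m => ((l : ℕ) : ℝ) - (m : ℝ)),
          erase_range_prod N l hlN]
      have hu : (k : ℝ) + 1 + θ * (l : ℝ) + α = x l + y k := by
        simp only [hxdef, hydef]; ring
      show θ * _ * _ * _ = _
      rw [hP2, hF1, hF2, hu]
      have hu0 : x l + y k ≠ 0 := hxy l k
      have hak : ((k : ℕ).factorial : ℝ) ≠ 0 := Nat.cast_ne_zero.mpr (Nat.factorial_ne_zero _)
      have hbk : ((N - 1 - (k : ℕ)).factorial : ℝ) ≠ 0 :=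
        Nat.cast_ne_zero.mpr (Nat.factorial_ne_zero _)
      have hal : ((l : ℕ).factorial : ℝ) ≠ 0 := Nat.cast_ne_zero.mpr (Nat.factorial_ne_zero _)
      have hbl : ((N - 1 - (l : ℕ)).factorial : ℝ) ≠ 0 :=
        Nat.cast_ne_zero.mpr (Nat.factorial_ne_zero _)
      have hsk : ((-1 : ℝ)) ^ (N - 1 - (k : ℕ)) ≠ 0 := pow_ne_zero _ (by norm_num)
      have hsl : ((-1 : ℝ)) ^ (N - 1 - (l : ℕ)) ≠ 0 := pow_ne_zero _ (by norm_num)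
      have hsign : ((-1 : ℝ)) ^ ((k : ℕ) + (l : ℕ)) =
          (-1) ^ (N - 1 - (k : ℕ)) * (-1) ^ (N - 1 - (l : ℕ)) := by
        have h2 : ((-1 : ℝ)) ^ (((k : ℕ) + (l : ℕ)) + ((N - 1 - (k : ℕ)) + (N - 1 - (l : ℕ))))
            = 1 := Even.neg_one_pow ⟨N - 1, by omega⟩
        rw [pow_add] at h2
        have hbb : ((-1 : ℝ)) ^ ((N - 1 - (k : ℕ)) + (N - 1 - (l : ℕ))) *
            ((-1 : ℝ)) ^ ((N - 1 - (k : ℕ)) + (N - 1 - (l : ℕ))) = 1 := by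
          rw [← mul_pow]; norm_num
        calc ((-1 : ℝ)) ^ ((k : ℕ) + (l : ℕ))
            = ((-1 : ℝ)) ^ ((k : ℕ) + (l : ℕ)) *
              (((-1 : ℝ)) ^ ((N - 1 - (k : ℕ)) + (N - 1 - (l : ℕ))) *
               ((-1 : ℝ)) ^ ((N - 1 - (k : ℕ)) + (N - 1 - (l : ℕ)))) := by rw [hbb, mul_one]
          _ = (((-1 : ℝ)) ^ ((k : ℕ) + (l : ℕ)) *
               ((-1 : ℝ)) ^ ((N - 1 - (k : ℕ)) + (N - 1 - (l : ℕ)))) *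
               ((-1 : ℝ)) ^ ((N - 1 - (k : ℕ)) + (N - 1 - (l : ℕ))) := by ring
          _ = ((-1 : ℝ)) ^ ((N - 1 - (k : ℕ)) + (N - 1 - (l : ℕ))) := by rw [h2, one_mul]
          _ = (-1) ^ (N - 1 - (k : ℕ)) * (-1) ^ (N - 1 - (l : ℕ)) := pow_add _ _ _
      have hθpow : θ ^ N = θ ^ (N - 1) * θ := by
        rw [← pow_succ]
        congr 1
        omega
      rw [hsign, hP1, hθpow]
      exact scalar_id θ (x l + y k) _ _ _ _ _ _ _ _ (N - 1) hθ0 hu0 hak hbk hal hbl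
        (by rw [← mul_pow]; norm_num) (by rw [← mul_pow]; norm_num)
    have hCeq : C = Matrix.of fun k l =>
        ((∏ m, (x l + y m)) * (∏ m, (x m + y k)) *
          ((∏ m ∈ univ.erase l, (x l - x m))⁻¹ * (∏ m ∈ univ.erase k, (y k - y m))⁻¹ *
            (x l + y k)⁻¹)) := by
      ext k l
      exact hC k l
    have hGeq : ∀ l j : Fin N, G l j = (x l + y j)⁻¹ := by
      intro l j
      show 1 / ((j : ℝ) + 1 + θ * (l : ℝ) + α) = _
      rw [one_div]
      congr 1
      simp only [hxdef, hydef]; ring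
    ext k j
    rw [Matrix.mul_apply, Matrix.one_apply]
    calc ∑ l, C k l * G l j
        = ∑ l, ((∏ m, (x l + y m)) * (∏ m, (x m + y k)) *
            ((∏ m ∈ univ.erase l, (x l - x m))⁻¹ * (∏ m ∈ univ.erase k, (y k - y m))⁻¹ *
              (x l + y k)⁻¹)) * (x l + y j)⁻¹ := by
          refine Finset.sum_congr rfl fun l _ => ?_
          rw [hC k l, hGeq l j]
      _ = if k = j then 1 else 0 := cauchy_entry N x y hx hy hxy k j
  exact ⟨hCG, mul_eq_one_comm.mp hCG⟩
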